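/- Let k be a field with char k ≠ 2, m,n ≥ 1 integers, D an invertible diagonal n×n matrix over k, and M = 0_m ⊕ D. Then the Lie algebra o(M) is solvable if and only if m ≤ 1 and n ≤ 2. -/

import Mathlib

open Matrix LieAlgebra

attribute [local instance 100] LieRing.ofAssociativeRing

/-- The Lie algebra `o(M) = {X ∈ gl | Xᵀ * M + M * X = 0}` of matrices preserving the
bilinear form with Gram matrix `M`. -/
def lieO (k : Type) [Field k] {ι : Type} [Fintype ι] [DecidableEq ι]
    (M : Matrix ι ι k) : LieSubalgebra k (Matrix ι ι k) where
  carrier := {X | Xᵀ * M + M * X = 0}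
  zero_mem' := by simp
  add_mem' := by
    intro X Y hX hY
    simp only [Set.mem_setOf_eq] at *
    rw [Matrix.transpose_add, Matrix.add_mul, Matrix.mul_add, add_add_add_comm, hX, hY, add_zero]
  smul_mem' := by
    intro c X hX
    simp only [Set.mem_setOf_eq] at *
    rw [Matrix.transpose_smul, Matrix.smul_mul, Matrix.mul_smul, ← smul_add, hX, smul_zero]
  lie_mem' := by
    intro X Y hX hY
    simp only [Set.mem_setOf_eq] at *
    have hX' : Xᵀ * M = -(M * X) := eq_neg_of_add_eq_zero_left hX
    have hY' : Yᵀ * M = -(M * Y) := eq_neg_of_add_eq_zero_left hY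
    have h1 : Yᵀ * Xᵀ * M = M * Y * X := by
      rw [mul_assoc, hX', mul_neg, ← mul_assoc, hY', neg_mul, neg_neg]
    have h2 : Xᵀ * Yᵀ * M = M * X * Y := by
      rw [mul_assoc, hY', mul_neg, ← mul_assoc, hX', neg_mul, neg_neg]
    simp only [Ring.lie_def, Matrix.transpose_sub, Matrix.transpose_mul, Matrix.sub_mul,
      Matrix.mul_sub]
    rw [h1, h2, ← mul_assoc M X Y, ← mul_assoc M Y X]
    abel


open Sum


theorem not_solvable_of_triple {k L : Type} [Field k] [LieRing L] [LieAlgebra k L]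
    {x y z : L} (hx : x ≠ 0) {c1 c2 c3 : k} (h1 : c1 ≠ 0) (h2 : c2 ≠ 0) (h3 : c3 ≠ 0)
    (hxy : ⁅x, y⁆ = c1 • z) (hyz : ⁅y, z⁆ = c2 • x) (hzx : ⁅z, x⁆ = c3 • y) :
    ¬ LieAlgebra.IsSolvable L := by
  intro hs
  have key : ∀ N, x ∈ derivedSeries k L N ∧ y ∈ derivedSeries k L N ∧
      z ∈ derivedSeries k L N := by
    intro N
    induction N with
    | zero => exact ⟨LieSubmodule.mem_top x, LieSubmodule.mem_top y, LieSubmodule.mem_top z⟩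
    | succ N ih =>
      obtain ⟨hxN, hyN, hzN⟩ := ih
      have hsucc : derivedSeries k L (N + 1) =
          ⁅derivedSeries k L N, derivedSeries k L N⁆ := by
        rw [derivedSeries_def, derivedSeriesOfIdeal_succ, ← derivedSeries_def]
      rw [hsucc]
      set I := (⁅derivedSeries k L N, derivedSeries k L N⁆ : LieIdeal k L)
      have hz' : z ∈ I := by
        have := LieSubmodule.lie_mem_lie hxN hyN
        rw [hxy] at this
        have := I.smul_mem c1⁻¹ this
        rwa [smul_smul, inv_mul_cancel₀ h1, one_smul] at this
      have hx' : x ∈ I := by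
        have := LieSubmodule.lie_mem_lie hyN hzN
        rw [hyz] at this
        have := I.smul_mem c2⁻¹ this
        rwa [smul_smul, inv_mul_cancel₀ h2, one_smul] at this
      have hy' : y ∈ I := by
        have := LieSubmodule.lie_mem_lie hzN hxN
        rw [hzx] at this
        have := I.smul_mem c3⁻¹ this
        rwa [smul_smul, inv_mul_cancel₀ h3, one_smul] at this
      exact ⟨hx', hy', hz'⟩
  obtain ⟨N, hN⟩ := (LieAlgebra.isSolvable_iff k L).mp hs
  have := (key N).1
  rw [hN] at this
  exact hx (by simpa using this)

section helpers


variable {k : Type} [Field k] {m n : ℕ}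

theorem stdBasisMatrix_transpose {ι : Type} [DecidableEq ι] (i j : ι) (c : k) :
    (Matrix.single i j c)ᵀ = Matrix.single j i c := by
  ext a b
  simp [Matrix.single, and_comm]

theorem stdBasisMatrix_mul_diag {ι : Type} [Fintype ι] [DecidableEq ι] (i j : ι) (c : k)
    (d : ι → k) : Matrix.single i j c * diagonal d = Matrix.single i j (c * d j) := by
  ext a b
  rw [Matrix.mul_diagonal]
  by_cases h : i = a ∧ j = b
  · obtain ⟨rfl, rfl⟩ := h
    simp [Matrix.single]
  · simp [Matrix.single, if_neg h]

theorem diag_mul_stdBasisMatrix {ι : Type} [Fintype ι] [DecidableEq ι] (i j : ι) (c : k)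
    (d : ι → k) : diagonal d * Matrix.single i j c = Matrix.single i j (d i * c) := by
  ext a b
  rw [Matrix.diagonal_mul]
  by_cases h : i = a ∧ j = b
  · obtain ⟨rfl, rfl⟩ := h
    simp [Matrix.single]
  · simp [Matrix.single, if_neg h]

theorem ul_mem (D : Fin n → k) (A : Matrix (Fin m) (Fin m) k) :
    (fromBlocks A 0 0 0 : Matrix (Fin m ⊕ Fin n) (Fin m ⊕ Fin n) k) ∈
      lieO k (fromBlocks 0 0 0 (diagonal D)) := by
  show _ + _ = 0
  simp [fromBlocks_transpose, fromBlocks_multiply]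

theorem lr_mem (D : Fin n → k) (E : Matrix (Fin n) (Fin n) k)
    (hE : Eᵀ * diagonal D + diagonal D * E = 0) :
    (fromBlocks 0 0 0 E : Matrix (Fin m ⊕ Fin n) (Fin m ⊕ Fin n) k) ∈
      lieO k (fromBlocks 0 0 0 (diagonal D)) := by
  show _ + _ = 0
  simp only [fromBlocks_transpose, fromBlocks_multiply, Matrix.mul_zero, Matrix.zero_mul,
    Matrix.transpose_zero, add_zero, zero_add, fromBlocks_add, hE]
  simp

theorem lie_ul (A B : Matrix (Fin m) (Fin m) k) :
    ⁅(fromBlocks A 0 0 0 : Matrix (Fin m ⊕ Fin n) (Fin m ⊕ Fin n) k),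
      (fromBlocks B 0 0 0 : Matrix (Fin m ⊕ Fin n) (Fin m ⊕ Fin n) k)⁆ = fromBlocks ⁅A, B⁆ 0 0 0 := by
  simp only [Ring.lie_def, fromBlocks_multiply]
  ext p q
  rcases p with i | i <;> rcases q with j | j <;> simp [fromBlocks]

theorem lie_lr (A B : Matrix (Fin n) (Fin n) k) :
    ⁅(fromBlocks 0 0 0 A : Matrix (Fin m ⊕ Fin n) (Fin m ⊕ Fin n) k),
      (fromBlocks 0 0 0 B : Matrix (Fin m ⊕ Fin n) (Fin m ⊕ Fin n) k)⁆ = fromBlocks 0 0 0 ⁅A, B⁆ := by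
  simp only [Ring.lie_def, fromBlocks_multiply]
  ext p q
  rcases p with i | i <;> rcases q with j | j <;> simp [fromBlocks]

end helpers

section gl
variable {k : Type} [Field k] {m : ℕ} {i0 i1 : Fin m} (h : i0 ≠ i1)
include h

theorem lie_H_Yp :
    ⁅Matrix.single i0 i0 (1:k) - Matrix.single i1 i1 1,
      Matrix.single i0 i1 (1:k) + Matrix.single i1 i0 1⁆ =
    (2:k) • (Matrix.single i0 i1 (1:k) - Matrix.single i1 i0 1) := by
  rw [two_smul]
  simp only [Ring.lie_def, sub_mul, mul_sub, add_mul, mul_add]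
  simp [h, h.symm]
  abel

theorem lie_Yp_Ym :
    ⁅Matrix.single i0 i1 (1:k) + Matrix.single i1 i0 1,
      Matrix.single i0 i1 (1:k) - Matrix.single i1 i0 1⁆ =
    (-2:k) • (Matrix.single i0 i0 (1:k) - Matrix.single i1 i1 1) := by
  rw [neg_smul, two_smul]
  simp only [Ring.lie_def, sub_mul, mul_sub, add_mul, mul_add]
  simp [h, h.symm]
  abel

theorem lie_Ym_H :
    ⁅Matrix.single i0 i1 (1:k) - Matrix.single i1 i0 1,
      Matrix.single i0 i0 (1:k) - Matrix.single i1 i1 1⁆ =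
    (-2:k) • (Matrix.single i0 i1 (1:k) + Matrix.single i1 i0 1) := by
  rw [neg_smul, two_smul]
  simp only [Ring.lie_def, sub_mul, mul_sub, add_mul, mul_add]
  simp [h, h.symm]
  abel
end gl

section so
variable {k : Type} [Field k] {n : ℕ} (D : Fin n → k)


/-- generator of `o(D)` -/
def Ymat (a b : Fin n) : Matrix (Fin n) (Fin n) k :=
  D b • Matrix.single a b 1 - D a • Matrix.single b a 1

theorem Ymat_cond {a b : Fin n} (hab : a ≠ b) :
    (Ymat D a b)ᵀ * diagonal D + diagonal D * Ymat D a b = 0 := by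
  simp only [Ymat, transpose_sub, transpose_smul, stdBasisMatrix_transpose,
    sub_mul, mul_sub, smul_mul_assoc, Matrix.mul_smul, stdBasisMatrix_mul_diag,
    diag_mul_stdBasisMatrix, smul_single, smul_eq_mul, one_mul, mul_one]
  module

theorem Ymat_apply (a b i j : Fin n) :
    Ymat D a b i j = D b * Matrix.single a b 1 i j - D a * Matrix.single b a 1 i j := by
  simp [Ymat, Matrix.single]

theorem Ymat_ne_zero {a b : Fin n} (hab : a ≠ b) (hb : D b ≠ 0) : Ymat D a b ≠ 0 := by
  intro h
  have := congrFun (congrFun h a) b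
  rw [Ymat_apply] at this
  simp [hab, hab.symm] at this
  exact hb this

theorem Ymat_skew (a b : Fin n) : Ymat D a b = - Ymat D b a := by
  simp [Ymat]

theorem lie_Ymat {a b c : Fin n} (hab : a ≠ b) (hbc : b ≠ c) (hac : a ≠ c) :
    ⁅Ymat D a b, Ymat D a c⁆ = (- D a) • Ymat D b c := by
  simp only [Ring.lie_def, Ymat, sub_mul, mul_sub, smul_mul_assoc, Matrix.mul_smul]
  simp [hab, hbc, hac, hab.symm, hbc.symm, hac.symm]
  ext i j
  simp only [Matrix.neg_apply, Matrix.add_apply, Matrix.smul_apply, Matrix.sub_apply,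
    Matrix.single, Matrix.of_apply, smul_eq_mul]
  split_ifs <;> ring

end so

section entries


variable {k : Type} [Field k] {m n : ℕ} {D : Fin n → k}

theorem mem_lieO_iff {ι : Type} [Fintype ι] [DecidableEq ι] {M X : Matrix ι ι k} :
    X ∈ lieO k M ↔ Xᵀ * M + M * X = 0 := Iff.rfl

theorem entry_one {X : Matrix (Fin m ⊕ Fin n) (Fin m ⊕ Fin n) k}
    (p : Fin m ⊕ Fin n) (j : Fin n) :
    (X * fromBlocks 0 0 0 (diagonal D) : Matrix (Fin m ⊕ Fin n) (Fin m ⊕ Fin n) k) p (inr j) = X p (inr j) * D j := by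
  simp [Matrix.mul_apply, Fintype.sum_sum_type, fromBlocks, diagonal,
    Finset.sum_ite_eq, mul_ite]

theorem entry_one' {X : Matrix (Fin m ⊕ Fin n) (Fin m ⊕ Fin n) k}
    (p : Fin m ⊕ Fin n) (j : Fin m) :
    (X * fromBlocks 0 0 0 (diagonal D) : Matrix (Fin m ⊕ Fin n) (Fin m ⊕ Fin n) k) p (inl j) = 0 := by
  simp [Matrix.mul_apply, Fintype.sum_sum_type, fromBlocks]

theorem entry_two {X : Matrix (Fin m ⊕ Fin n) (Fin m ⊕ Fin n) k}
    (i : Fin n) (q : Fin m ⊕ Fin n) :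
    (fromBlocks 0 0 0 (diagonal D) * X : Matrix (Fin m ⊕ Fin n) (Fin m ⊕ Fin n) k) (inr i) q = D i * X (inr i) q := by
  simp [Matrix.mul_apply, Fintype.sum_sum_type, fromBlocks, diagonal,
    Finset.sum_ite_eq, ite_mul]

theorem entry_two' {X : Matrix (Fin m ⊕ Fin n) (Fin m ⊕ Fin n) k}
    (i : Fin m) (q : Fin m ⊕ Fin n) :
    (fromBlocks 0 0 0 (diagonal D) * X : Matrix (Fin m ⊕ Fin n) (Fin m ⊕ Fin n) k) (inl i) q = 0 := by
  simp [Matrix.mul_apply, Fintype.sum_sum_type, fromBlocks]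

theorem memC (hD : ∀ i, D i ≠ 0) {X : Matrix (Fin m ⊕ Fin n) (Fin m ⊕ Fin n) k}
    (hX : X ∈ lieO k (fromBlocks 0 0 0 (diagonal D))) (i : Fin n) (j : Fin m) :
    X (inr i) (inl j) = 0 := by
  rw [mem_lieO_iff] at hX
  have h := congrFun (congrFun hX (inr i)) (inl j)
  rw [Matrix.add_apply, entry_one', entry_two] at h
  simp only [Matrix.zero_apply, zero_add] at h
  exact (mul_eq_zero.mp h).resolve_left (hD i)

theorem memE {X : Matrix (Fin m ⊕ Fin n) (Fin m ⊕ Fin n) k}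
    (hX : X ∈ lieO k (fromBlocks 0 0 0 (diagonal D))) (i j : Fin n) :
    X (inr j) (inr i) * D j + D i * X (inr i) (inr j) = 0 := by
  rw [mem_lieO_iff] at hX
  have h := congrFun (congrFun hX (inr i)) (inr j)
  rw [Matrix.add_apply, entry_one, entry_two, Matrix.transpose_apply] at h
  simpa using h

theorem memDiagE (hchar : ringChar k ≠ 2) (hD : ∀ i, D i ≠ 0)
    {X : Matrix (Fin m ⊕ Fin n) (Fin m ⊕ Fin n) k}
    (hX : X ∈ lieO k (fromBlocks 0 0 0 (diagonal D))) (i : Fin n) :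
    X (inr i) (inr i) = 0 := by
  have h := memE hX i i
  have h2 : (2 : k) ≠ 0 := Ring.two_ne_zero hchar
  have h3 : (2 : k) * (X (inr i) (inr i) * D i) = 0 := by linear_combination h
  rcases mul_eq_zero.mp h3 with h4 | h4
  · exact absurd h4 h2
  · exact (mul_eq_zero.mp h4).resolve_right (hD i)

end entries

section ideal

variable {k : Type} [Field k] {m n : ℕ} {D : Fin n → k}

/-- The abelian ideal of "B-block" matrices. -/
def NIdeal (hD : ∀ i, D i ≠ 0) :
    LieIdeal k ↥(lieO k (fromBlocks 0 0 0 (diagonal D) : Matrix (Fin m ⊕ Fin n) (Fin m ⊕ Fin n) k)) where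
  carrier := {x | (∀ i j, (x : Matrix (Fin m ⊕ Fin n) (Fin m ⊕ Fin n) k) (inl i) (inl j) = 0) ∧
    ∀ i j, (x : Matrix (Fin m ⊕ Fin n) (Fin m ⊕ Fin n) k) (inr i) (inr j) = 0}
  add_mem' := by
    rintro a b ⟨ha1, ha2⟩ ⟨hb1, hb2⟩
    refine ⟨fun i j => ?_, fun i j => ?_⟩
    · show ((a : Matrix (Fin m ⊕ Fin n) (Fin m ⊕ Fin n) k) + (b : Matrix (Fin m ⊕ Fin n) (Fin m ⊕ Fin n) k)) (inl i) (inl j) = 0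
      rw [Matrix.add_apply, ha1 i j, hb1 i j, add_zero]
    · show ((a : Matrix (Fin m ⊕ Fin n) (Fin m ⊕ Fin n) k) + (b : Matrix (Fin m ⊕ Fin n) (Fin m ⊕ Fin n) k)) (inr i) (inr j) = 0
      rw [Matrix.add_apply, ha2 i j, hb2 i j, add_zero]
  zero_mem' := by
    refine ⟨fun i j => ?_, fun i j => ?_⟩ <;> rfl
  smul_mem' := by
    rintro c a ⟨h1, h2⟩
    refine ⟨fun i j => ?_, fun i j => ?_⟩
    · show (c • (a : Matrix (Fin m ⊕ Fin n) (Fin m ⊕ Fin n) k)) (inl i) (inl j) = 0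
      rw [Matrix.smul_apply, h1 i j, smul_zero]
    · show (c • (a : Matrix (Fin m ⊕ Fin n) (Fin m ⊕ Fin n) k)) (inr i) (inr j) = 0
      rw [Matrix.smul_apply, h2 i j, smul_zero]
  lie_mem := by
    rintro a x ⟨h1, h2⟩
    have hax : (↑⁅a, x⁆ : Matrix (Fin m ⊕ Fin n) (Fin m ⊕ Fin n) k) = ⁅(a : Matrix (Fin m ⊕ Fin n) (Fin m ⊕ Fin n) k), (x : Matrix (Fin m ⊕ Fin n) (Fin m ⊕ Fin n) k)⁆ :=
      LieSubalgebra.coe_bracket _ a x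
    constructor <;> intro i j <;>
      rw [hax, Ring.lie_def, Matrix.sub_apply, Matrix.mul_apply, Matrix.mul_apply]
    · rw [Finset.sum_eq_zero, Finset.sum_eq_zero, sub_zero]
      · rintro (c | c) -
        · rw [h1 i c, zero_mul]
        · rw [memC hD a.2 c j, mul_zero]
      · rintro (c | c) -
        · rw [h1 c j, mul_zero]
        · rw [memC hD x.2 c j, mul_zero]
    · rw [Finset.sum_eq_zero, Finset.sum_eq_zero, sub_zero]
      · rintro (c | c) -
        · rw [memC hD x.2 i c, zero_mul]
        · rw [h2 i c, zero_mul]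
      · rintro (c | c) -
        · rw [memC hD a.2 i c, zero_mul]
        · rw [h2 c j, mul_zero]

theorem NIdeal_mul_zero (hD : ∀ i, D i ≠ 0)
    {x y : ↥(lieO k (fromBlocks 0 0 0 (diagonal D) : Matrix (Fin m ⊕ Fin n) (Fin m ⊕ Fin n) k))}
    (hx : x ∈ NIdeal hD) (hy : y ∈ NIdeal hD) :
    (x : Matrix (Fin m ⊕ Fin n) (Fin m ⊕ Fin n) k) * (y : Matrix (Fin m ⊕ Fin n) (Fin m ⊕ Fin n) k) = 0 := by
  obtain ⟨hx1, hx2⟩ := hx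
  obtain ⟨hy1, hy2⟩ := hy
  ext p q
  rw [Matrix.mul_apply, Matrix.zero_apply, Finset.sum_eq_zero]
  rintro (c | c) -
  · rcases p with i | i
    · rw [hx1 i c, zero_mul]
    · rw [memC hD x.2 i c, zero_mul]
  · rcases q with j | j
    · rw [memC hD y.2 c j, mul_zero]
    · rw [hy2 c j, mul_zero]

theorem NIdeal_lie_zero (hD : ∀ i, D i ≠ 0)
    {x y : ↥(lieO k (fromBlocks 0 0 0 (diagonal D) : Matrix (Fin m ⊕ Fin n) (Fin m ⊕ Fin n) k))}
    (hx : x ∈ NIdeal hD) (hy : y ∈ NIdeal hD) : ⁅x, y⁆ = 0 := by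
  apply Subtype.ext
  have : (↑⁅x, y⁆ : Matrix (Fin m ⊕ Fin n) (Fin m ⊕ Fin n) k) = ⁅(x : Matrix (Fin m ⊕ Fin n) (Fin m ⊕ Fin n) k), (y : Matrix (Fin m ⊕ Fin n) (Fin m ⊕ Fin n) k)⁆ :=
    LieSubalgebra.coe_bracket _ x y
  rw [this, Ring.lie_def, NIdeal_mul_zero hD hx hy, NIdeal_mul_zero hD hy hx, sub_zero]
  rfl

end ideal

section solvdir

variable {k : Type} [Field k] {n : ℕ} {D : Fin n → k}

theorem bracket_mem_NIdeal (hchar : ringChar k ≠ 2) (hD : ∀ i, D i ≠ 0) (hn : n ≤ 2)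
    (a b : ↥(lieO k (fromBlocks 0 0 0 (diagonal D) : Matrix (Fin 1 ⊕ Fin n) (Fin 1 ⊕ Fin n) k))) :
    ⁅a, b⁆ ∈ NIdeal (m := 1) hD := by
  have hab : (↑⁅a, b⁆ : Matrix (Fin 1 ⊕ Fin n) (Fin 1 ⊕ Fin n) k) =
      ⁅(a : Matrix (Fin 1 ⊕ Fin n) (Fin 1 ⊕ Fin n) k), (b : Matrix (Fin 1 ⊕ Fin n) (Fin 1 ⊕ Fin n) k)⁆ :=
    LieSubalgebra.coe_bracket _ a b
  refine ⟨fun i j => ?_, fun i j => ?_⟩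
  · rw [hab, Ring.lie_def, Matrix.sub_apply, Matrix.mul_apply, Matrix.mul_apply,
      Fintype.sum_sum_type, Fintype.sum_sum_type]
    have hi : i = 0 := Subsingleton.elim i 0
    have hj : j = 0 := Subsingleton.elim j 0
    subst hi hj
    rw [Finset.sum_eq_zero (fun (c : Fin n) (_ : c ∈ Finset.univ) =>
        by rw [memC hD b.2 c 0, mul_zero] :
        ∀ c ∈ Finset.univ, (↑a : Matrix (Fin 1 ⊕ Fin n) (Fin 1 ⊕ Fin n) k) (inl 0) (inr c) *
          (↑b : Matrix (Fin 1 ⊕ Fin n) (Fin 1 ⊕ Fin n) k) (inr c) (inl 0) = 0),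
      Finset.sum_eq_zero (fun (c : Fin n) (_ : c ∈ Finset.univ) =>
        by rw [memC hD a.2 c 0, mul_zero] :
        ∀ c ∈ Finset.univ, (↑b : Matrix (Fin 1 ⊕ Fin n) (Fin 1 ⊕ Fin n) k) (inl 0) (inr c) *
          (↑a : Matrix (Fin 1 ⊕ Fin n) (Fin 1 ⊕ Fin n) k) (inr c) (inl 0) = 0)]
    simp [Fin.sum_univ_one]
    ring
  · rw [hab, Ring.lie_def, Matrix.sub_apply, Matrix.mul_apply, Matrix.mul_apply,
      Fintype.sum_sum_type, Fintype.sum_sum_type]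
    rw [Finset.sum_eq_zero (fun (c : Fin 1) (_ : c ∈ Finset.univ) =>
        by rw [memC hD a.2 i c, zero_mul] :
        ∀ c ∈ Finset.univ, (↑a : Matrix (Fin 1 ⊕ Fin n) (Fin 1 ⊕ Fin n) k) (inr i) (inl c) *
          (↑b : Matrix (Fin 1 ⊕ Fin n) (Fin 1 ⊕ Fin n) k) (inl c) (inr j) = 0),
      Finset.sum_eq_zero (fun (c : Fin 1) (_ : c ∈ Finset.univ) =>
        by rw [memC hD b.2 i c, zero_mul] :
        ∀ c ∈ Finset.univ, (↑b : Matrix (Fin 1 ⊕ Fin n) (Fin 1 ⊕ Fin n) k) (inr i) (inl c) *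
          (↑a : Matrix (Fin 1 ⊕ Fin n) (Fin 1 ⊕ Fin n) k) (inl c) (inr j) = 0),
      zero_add, zero_add]
    interval_cases n
    · exact i.elim0
    · fin_cases i <;> fin_cases j <;>
        simp [Fin.sum_univ_one, memDiagE hchar hD a.2, memDiagE hchar hD b.2]
    · have ra := memE a.2 0 1
      have rb := memE b.2 0 1
      have da := memDiagE hchar hD a.2
      have db := memDiagE hchar hD b.2
      have hD1 := hD 1
      have ha' : (↑a : Matrix (Fin 1 ⊕ Fin 2) (Fin 1 ⊕ Fin 2) k) (inr 1) (inr 0) =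
          -(D 0) * (↑a : Matrix (Fin 1 ⊕ Fin 2) (Fin 1 ⊕ Fin 2) k) (inr 0) (inr 1) / D 1 := by
        field_simp
        linear_combination ra
      have hb' : (↑b : Matrix (Fin 1 ⊕ Fin 2) (Fin 1 ⊕ Fin 2) k) (inr 1) (inr 0) =
          -(D 0) * (↑b : Matrix (Fin 1 ⊕ Fin 2) (Fin 1 ⊕ Fin 2) k) (inr 0) (inr 1) / D 1 := by
        field_simp
        linear_combination rb
      fin_cases i <;> fin_cases j <;>
        simp [Fin.sum_univ_two, da, db, ha', hb'] <;>
      · field_simp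
        ring

end solvdir


/-- Let `char k ≠ 2`, `m, n ≥ 1`, `D` an invertible diagonal `n × n`
matrix and `M = 0ₘ ⊕ D`.  Then `o(M)` is solvable iff `m ≤ 1` and `n ≤ 2`. -/
theorem lieO_solvable_iff_of_charNeTwo (k : Type) [Field k] (hchar : ringChar k ≠ 2)
    (m n : ℕ) (hm : 1 ≤ m) (hn : 1 ≤ n) (D : Fin n → k) (hD : ∀ i, D i ≠ 0) :
    LieAlgebra.IsSolvable
        ↥(lieO k (Matrix.fromBlocks 0 0 0 (Matrix.diagonal D)
          : Matrix (Fin m ⊕ Fin n) (Fin m ⊕ Fin n) k)) ↔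
      (m ≤ 1 ∧ n ≤ 2) := by
  constructor
  · intro hs
    by_contra hcon
    rw [not_and_or, not_le, not_le] at hcon
    rcases hcon with hm2 | hn3
    · -- m ≥ 2 : gl₂ inside, not solvable
      have hm2' : 2 ≤ m := hm2
      set i0 : Fin m := ⟨0, by omega⟩
      set i1 : Fin m := ⟨1, by omega⟩
      have h01 : i0 ≠ i1 := by simp [i0, i1, Fin.ext_iff]
      set H : Matrix (Fin m) (Fin m) k := Matrix.single i0 i0 1 - Matrix.single i1 i1 1 with hH
      set Yp : Matrix (Fin m) (Fin m) k := Matrix.single i0 i1 1 + Matrix.single i1 i0 1 with hYp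
      set Ym : Matrix (Fin m) (Fin m) k := Matrix.single i0 i1 1 - Matrix.single i1 i0 1 with hYm
      set L := lieO k (Matrix.fromBlocks 0 0 0 (Matrix.diagonal D)
        : Matrix (Fin m ⊕ Fin n) (Fin m ⊕ Fin n) k)
      set x : L := ⟨fromBlocks H 0 0 0, ul_mem D H⟩ with hx
      set y : L := ⟨fromBlocks Yp 0 0 0, ul_mem D Yp⟩ with hy
      set z : L := ⟨fromBlocks Ym 0 0 0, ul_mem D Ym⟩ with hz
      have h2 : (2 : k) ≠ 0 := Ring.two_ne_zero hchar
      have hxne : x ≠ 0 := by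
        intro hx0
        have h := congrFun (congrFun (congrArg Subtype.val hx0) (inl i0)) (inl i0)
        rw [show ((x : ↥L) : Matrix (Fin m ⊕ Fin n) (Fin m ⊕ Fin n) k) = fromBlocks H 0 0 0
            from rfl,
          fromBlocks_apply₁₁, hH, Matrix.sub_apply, single_apply_same,
          single_apply_of_ne _ _ _ _ _ (fun hc => h01 hc.1.symm), sub_zero] at h
        simp only [ZeroMemClass.coe_zero, Matrix.zero_apply] at h
        exact one_ne_zero h
      refine not_solvable_of_triple (y := y) (z := z) hxne h2 (neg_ne_zero.mpr h2)
        (neg_ne_zero.mpr h2) (c1 := (2:k)) (c2 := (-2:k)) (c3 := (-2:k)) ?_ ?_ ?_ hs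
      · apply Subtype.ext
        rw [LieSubalgebra.coe_bracket]
        show ⁅fromBlocks H 0 0 0, fromBlocks Yp 0 0 0⁆ = _
        rw [lie_ul, lie_H_Yp h01]
        show _ = (2:k) • fromBlocks Ym 0 0 0
        rw [fromBlocks_smul, hYm]
        simp only [smul_zero]
      · apply Subtype.ext
        rw [LieSubalgebra.coe_bracket]
        show ⁅fromBlocks Yp 0 0 0, fromBlocks Ym 0 0 0⁆ = _
        rw [lie_ul, lie_Yp_Ym h01]
        show _ = (-2:k) • fromBlocks H 0 0 0
        rw [fromBlocks_smul, hH]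
        simp only [smul_zero]
      · apply Subtype.ext
        rw [LieSubalgebra.coe_bracket]
        show ⁅fromBlocks Ym 0 0 0, fromBlocks H 0 0 0⁆ = _
        rw [lie_ul, lie_Ym_H h01]
        show _ = (-2:k) • fromBlocks Yp 0 0 0
        rw [fromBlocks_smul, hYp]
        simp only [smul_zero]
    · -- n ≥ 3 : so₃ inside, not solvable
      have hn3' : 3 ≤ n := hn3
      set j0 : Fin n := ⟨0, by omega⟩
      set j1 : Fin n := ⟨1, by omega⟩
      set j2 : Fin n := ⟨2, by omega⟩
      have h01 : j0 ≠ j1 := by simp [j0, j1, Fin.ext_iff]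
      have h02 : j0 ≠ j2 := by simp [j0, j2, Fin.ext_iff]
      have h12 : j1 ≠ j2 := by simp [j1, j2, Fin.ext_iff]
      set L := lieO k (Matrix.fromBlocks 0 0 0 (Matrix.diagonal D)
        : Matrix (Fin m ⊕ Fin n) (Fin m ⊕ Fin n) k)
      set x : L := ⟨fromBlocks 0 0 0 (Ymat D j0 j1), lr_mem D _ (Ymat_cond D h01)⟩ with hx
      set y : L := ⟨fromBlocks 0 0 0 (Ymat D j0 j2), lr_mem D _ (Ymat_cond D h02)⟩ with hy
      set z : L := ⟨fromBlocks 0 0 0 (Ymat D j1 j2), lr_mem D _ (Ymat_cond D h12)⟩ with hz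
      have hxne : x ≠ 0 := by
        intro hx0
        apply Ymat_ne_zero D h01 (hD j1)
        ext i j
        exact congrFun (congrFun (congrArg Subtype.val hx0) (inr i)) (inr j)
      refine not_solvable_of_triple (y := y) (z := z) hxne (neg_ne_zero.mpr (hD j0))
        (neg_ne_zero.mpr (hD j2)) (neg_ne_zero.mpr (hD j1))
        (c1 := -D j0) (c2 := -D j2) (c3 := -D j1) ?_ ?_ ?_ hs
      · apply Subtype.ext
        rw [LieSubalgebra.coe_bracket]
        show ⁅fromBlocks 0 0 0 (Ymat D j0 j1), fromBlocks 0 0 0 (Ymat D j0 j2)⁆ = _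
        rw [lie_lr, lie_Ymat D h01 h12 h02]
        show _ = (-D j0) • fromBlocks 0 0 0 (Ymat D j1 j2)
        rw [fromBlocks_smul]
        simp only [smul_zero]
      · apply Subtype.ext
        rw [LieSubalgebra.coe_bracket]
        show ⁅fromBlocks 0 0 0 (Ymat D j0 j2), fromBlocks 0 0 0 (Ymat D j1 j2)⁆ = _
        rw [lie_lr]
        have : ⁅Ymat D j0 j2, Ymat D j1 j2⁆ = (-D j2) • Ymat D j0 j1 := by
          rw [Ymat_skew D j0 j2, Ymat_skew D j1 j2, neg_lie, lie_neg, neg_neg,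
            lie_Ymat D h02.symm h01 h12.symm]
        rw [this]
        show _ = (-D j2) • fromBlocks 0 0 0 (Ymat D j0 j1)
        rw [fromBlocks_smul]
        simp only [smul_zero]
      · apply Subtype.ext
        rw [LieSubalgebra.coe_bracket]
        show ⁅fromBlocks 0 0 0 (Ymat D j1 j2), fromBlocks 0 0 0 (Ymat D j0 j1)⁆ = _
        rw [lie_lr]
        have : ⁅Ymat D j1 j2, Ymat D j0 j1⁆ = (-D j1) • Ymat D j0 j2 := by
          rw [Ymat_skew D j0 j1, lie_neg, lie_skew, lie_Ymat D h01.symm h02 h12]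
        rw [this]
        show _ = (-D j1) • fromBlocks 0 0 0 (Ymat D j0 j2)
        rw [fromBlocks_smul]
        simp only [smul_zero]
  · rintro ⟨hm1, hn2⟩
    have hm : m = 1 := le_antisymm hm1 hm
    subst hm
    set L := lieO k (Matrix.fromBlocks 0 0 0 (Matrix.diagonal D)
      : Matrix (Fin 1 ⊕ Fin n) (Fin 1 ⊕ Fin n) k)
    have hd1 : derivedSeries k (↥L) 1 ≤ NIdeal (m := 1) hD := by
      have : derivedSeries k (↥L) 1 = ⁅(⊤ : LieIdeal k ↥L), (⊤ : LieIdeal k ↥L)⁆ := by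
        rw [derivedSeries_def, derivedSeriesOfIdeal_succ, derivedSeriesOfIdeal_zero]
      rw [this, LieSubmodule.lie_le_iff]
      intro a _ b _
      exact bracket_mem_NIdeal hchar hD hn2 a b
    rw [LieAlgebra.isSolvable_iff k]
    refine ⟨2, le_bot_iff.mp ?_⟩
    have h2 : derivedSeries k (↥L) 2 =
        ⁅derivedSeries k (↥L) 1, derivedSeries k (↥L) 1⁆ := by
      rw [derivedSeries_def, derivedSeriesOfIdeal_succ, ← derivedSeries_def]
    rw [h2]
    refine le_trans (LieSubmodule.mono_lie hd1 hd1) ?_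
    rw [LieSubmodule.lie_le_iff]
    intro a ha b hb
    rw [LieSubmodule.mem_bot]
    exact NIdeal_lie_zero hD ha hb
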